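/- Let ẋ = p(x,y), ẏ = q(x,y) be a quadratic system with p = a₁₀x + a₀₁y + a₂₀x² + a₁₁xy and q = b₁₀x + b₀₁y + b₂₀x² + b₁₁xy + 2a₁₁y², and suppose f(x,y) is a polynomial of degree n with p·f_x + q·f_y = k·f for a polynomial k of degree at most 1. Define the transformed system p̃(x,y) = x³p(1/x, y/x²), q̃(x,y) = 2x²y·p(1/x, y/x²) - x³q(1/x, y/x²), and let m be the value of the curve under the transformation, writing f̃(x,y) = x^{2n}·f(1/x, y/x²)·x^{-m} with m chosen maximal so that f̃ is a polynomial not divisible by x. Then there exists a polynomial k̃ of degree at most 1 such that p̃·∂f̃/∂x + q̃·∂f̃/∂y = k̃·f̃; i.e. the transformed curve is invariant for the transformed system. -/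

import Mathlib

set_option maxHeartbeats 1000000

open MvPolynomial

private lemma eval_curve_hasDerivAt (c₁ c₂ : ℝ → ℝ) (t d₁ d₂ : ℝ)
    (h₁ : HasDerivAt c₁ d₁ t) (h₂ : HasDerivAt c₂ d₂ t) (f : MvPolynomial (Fin 2) ℝ) :
    HasDerivAt (fun s => eval ![c₁ s, c₂ s] f)
      (eval ![c₁ t, c₂ t] (pderiv 0 f) * d₁ + eval ![c₁ t, c₂ t] (pderiv 1 f) * d₂) t := by
  induction f using MvPolynomial.induction_on with
  | C a => simpa using hasDerivAt_const t a
  | add p q hp hq =>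
      have := hp.add hq
      simp only [eval_add, map_add] at *
      refine this.congr_deriv ?_
      ring
  | mul_X p i hp =>
      fin_cases i
      · have := hp.mul h₁
        simp only [Fin.mk_zero, Fin.mk_one, eval_mul, eval_X, Matrix.cons_val_zero, pderiv_mul,
          map_add, eval_add, pderiv_X_self, map_one, mul_one] at *
        refine this.congr_deriv ?_
        rw [pderiv_X_of_ne (by decide)]
        simp only [map_zero, eval_mul, eval_X, Matrix.cons_val_zero, mul_zero, add_zero]
        ring
      · have := hp.mul h₂
        simp only [Fin.mk_zero, Fin.mk_one, eval_mul, eval_X, Matrix.cons_val_one,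
          Matrix.head_cons, pderiv_mul, map_add, eval_add, pderiv_X_self, map_one, mul_one] at *
        refine this.congr_deriv ?_
        rw [pderiv_X_of_ne (by decide)]
        simp only [map_zero, eval_mul, eval_X, Matrix.cons_val_one, Matrix.head_cons, mul_zero,
          add_zero, Matrix.cons_val_zero]
        ring

private lemma eq_of_eval_eq_offaxis (A B : MvPolynomial (Fin 2) ℝ)
    (h : ∀ x y : ℝ, x ≠ 0 → eval ![x, y] A = eval ![x, y] B) : A = B := by
  have hX : (X 0 : MvPolynomial (Fin 2) ℝ) ≠ 0 := X_ne_zero 0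
  refine mul_left_cancel₀ hX ?_
  apply MvPolynomial.funext
  intro v
  have hv : ![v 0, v 1] = v := by
    funext i; fin_cases i <;> rfl
  by_cases h0 : v 0 = 0
  · simp [eval_mul, h0]
  · have := h (v 0) (v 1) h0
    rw [hv] at this
    simp [eval_mul, this]

private lemma deg_le_one_decomp (k : MvPolynomial (Fin 2) ℝ) (h : k.totalDegree ≤ 1) :
    k = C (coeff 0 k) + C (coeff (Finsupp.single 0 1) k) * X 0 +
        C (coeff (Finsupp.single 1 1) k) * X 1 := by
  apply MvPolynomial.ext
  intro d
  have hrep : d = Finsupp.single 0 (d 0) + Finsupp.single 1 (d 1) := by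
    ext i; fin_cases i <;> simp [Finsupp.single_apply]
  rw [coeff_add, coeff_add, coeff_C, coeff_C_mul, coeff_C_mul, coeff_X', coeff_X']
  rcases eq_or_ne (coeff d k) 0 with hc | hc
  · clear hrep
    rw [hc]
    split_ifs with h1 h2 h3 h4 h5 h6 h7 <;>
      simp_all [eq_comm, Finsupp.single_eq_single_iff, Finsupp.single_eq_zero]
  · have hdeg : d 0 + d 1 ≤ 1 := by
      have h1 := (MvPolynomial.le_totalDegree (mem_support_iff.mpr hc)).trans h
      rw [Finsupp.sum_fintype _ _ (fun _ => rfl), Fin.sum_univ_two] at h1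
      exact h1
    have hcases : (d 0 = 0 ∧ d 1 = 0) ∨ (d 0 = 1 ∧ d 1 = 0) ∨ (d 0 = 0 ∧ d 1 = 1) := by omega
    clear hdeg hc h
    rcases hcases with ⟨ha, hb⟩ | ⟨ha, hb⟩ | ⟨ha, hb⟩ <;>
      rw [ha, hb] at hrep <;>
      simp only [Finsupp.single_zero, add_zero, zero_add] at hrep <;>
      subst hrep <;>
      simp [eq_comm, Finsupp.single_eq_zero, Finsupp.single_eq_single_iff]

private lemma X_mul_pderiv_pow (m : ℕ) :
    X 0 * pderiv 0 ((X 0 : MvPolynomial (Fin 2) ℝ) ^ m) = C (m : ℝ) * X 0 ^ m := by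
  induction m with
  | zero => simp
  | succ p hp =>
      rw [pow_succ, pderiv_mul, pderiv_X_self]
      push_cast
      rw [map_add, map_one]
      calc X 0 * (pderiv 0 (X 0 ^ p) * X 0 + X 0 ^ p * 1)
          = (X 0 * pderiv 0 ((X 0 : MvPolynomial (Fin 2) ℝ) ^ p)) * X 0 + X 0 ^ p * X 0 := by ring
        _ = (C (p : ℝ) + 1) * (X 0 ^ p * X 0) := by rw [hp]; ring
        _ = _ := by rw [← pow_succ]

private lemma pderiv1_X0_pow (m : ℕ) :
    pderiv 1 ((X 0 : MvPolynomial (Fin 2) ℝ) ^ m) = 0 := by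
  induction m with
  | zero => simp
  | succ p hp => rw [pow_succ, pderiv_mul, hp, pderiv_X_of_ne (by decide)]; simp

private lemma prime_X0 : Prime (X 0 : MvPolynomial (Fin 2) ℝ) := by
  rw [← MulEquiv.prime_iff (finSuccEquiv ℝ 1).toMulEquiv]
  have : (finSuccEquiv ℝ 1).toMulEquiv (X 0) = Polynomial.X := finSuccEquiv_X_zero
  rw [this]
  exact Polynomial.prime_X

/-- Under the Cremona transformation `(x,y) ↦ (1/x, y/x²)` (type (C2)), an invariant
algebraic curve `f` of the quadratic system with `a₀₀ = b₀₀ = a₀₂ = 0`, `b₀₂ = 2a₁₁`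
transforms to an invariant algebraic curve `f̃` (the strict transform, i.e. the
polynomial satisfying `x^m·f̃(x,y) = x^{2n}·f(1/x, y/x²)` with `f̃` not divisible by `x`)
of the transformed quadratic system `p̃(x,y) = x³p(1/x, y/x²)`,
`q̃(x,y) = 2x²y·p(1/x, y/x²) - x³q(1/x, y/x²)`, with a cofactor of degree at most 1. -/
theorem cremona_transform_invariant_curve
    (a10 a01 a20 a11 b10 b01 b20 b11 : ℝ) (n m : ℕ)
    (f k : MvPolynomial (Fin 2) ℝ)
    (hfdeg : f.totalDegree = n) (hkdeg : k.totalDegree ≤ 1)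
    (hinv :
      (C a10 * X 0 + C a01 * X 1 + C a20 * X 0 ^ 2 + C a11 * X 0 * X 1) * pderiv 0 f +
        (C b10 * X 0 + C b01 * X 1 + C b20 * X 0 ^ 2 + C b11 * X 0 * X 1 +
            C (2 * a11) * X 1 ^ 2) * pderiv 1 f = k * f)
    (ftilde : MvPolynomial (Fin 2) ℝ)
    (hstrict : ∀ x y : ℝ, x ≠ 0 →
      x ^ m * eval ![x, y] ftilde = x ^ (2 * n) * eval ![1 / x, y / x ^ 2] f)
    (hnotdvd : ¬ X 0 ∣ ftilde) :
    ∃ ktilde : MvPolynomial (Fin 2) ℝ, ktilde.totalDegree ≤ 1 ∧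
      (C a20 * X 0 + C a11 * X 1 + C a10 * X 0 ^ 2 + C a01 * X 0 * X 1) * pderiv 0 ftilde +
        (C (-b20) * X 0 + C (2 * a20 - b11) * X 1 + C (-b10) * X 0 ^ 2 +
            C (2 * a10 - b01) * X 0 * X 1 + C (2 * a01) * X 1 ^ 2) * pderiv 1 ftilde =
      ktilde * ftilde := by
  classical
  set c0 : ℝ := coeff 0 k with hc0
  set c1 : ℝ := coeff (Finsupp.single 0 1) k with hc1
  set c2 : ℝ := coeff (Finsupp.single 1 1) k with hc2
  have hk : k = C c0 + C c1 * X 0 + C c2 * X 1 := deg_le_one_decomp k hkdeg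
  set P : MvPolynomial (Fin 2) ℝ :=
    C a20 * X 0 + C a11 * X 1 + C a10 * X 0 ^ 2 + C a01 * X 0 * X 1 with hPdef
  set Q : MvPolynomial (Fin 2) ℝ :=
    C (-b20) * X 0 + C (2 * a20 - b11) * X 1 + C (-b10) * X 0 ^ 2 +
      C (2 * a10 - b01) * X 0 * X 1 + C (2 * a01) * X 1 ^ 2 with hQdef
  set Kp : MvPolynomial (Fin 2) ℝ :=
    C ((2 * n : ℕ) : ℝ) * P - (C c0 * X 0 ^ 2 + C c1 * X 0 + C c2 * X 1) with hKpdef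
  set g : MvPolynomial (Fin 2) ℝ := X 0 ^ m * ftilde with hgdef
  -- Step 1: the key polynomial identity
  have hpoly : X 0 * (P * pderiv 0 g + Q * pderiv 1 g) = g * Kp := by
    apply eq_of_eval_eq_offaxis
    intro x y hx
    set F0 : ℝ := eval ![1 / x, y / x ^ 2] f with hF0
    set A0 : ℝ := eval ![1 / x, y / x ^ 2] (pderiv 0 f) with hA0
    set A1 : ℝ := eval ![1 / x, y / x ^ 2] (pderiv 1 f) with hA1
    -- evaluation of g
    have hgev : ∀ a b : ℝ, eval ![a, b] g = a ^ m * eval ![a, b] ftilde := by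
      intro a b; simp [hgdef]
    -- x-derivative of eval g
    have h1x : HasDerivAt (fun s => eval ![s, y] g) (eval ![x, y] (pderiv 0 g)) x := by
      simpa using eval_curve_hasDerivAt id (fun _ => y) x 1 0 (hasDerivAt_id x)
        (hasDerivAt_const x y) g
    have hinvd : HasDerivAt (fun s : ℝ => 1 / s) (-(1 / x ^ 2)) x := by
      simpa [one_div] using hasDerivAt_inv hx
    have hyd : HasDerivAt (fun s : ℝ => y / s ^ 2) (-(2 * y / x ^ 3)) x := by
      have h2 : HasDerivAt (fun s : ℝ => s ^ 2) (2 * x) x := by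
        simpa using hasDerivAt_pow 2 x
      have h3 := (h2.inv (pow_ne_zero 2 hx)).const_mul y
      have h4 : (fun s : ℝ => y / s ^ 2) = fun s => y * (fun s : ℝ => s ^ 2)⁻¹ s := by
        funext s; simp [div_eq_mul_inv]
      rw [h4]
      refine h3.congr_deriv ?_
      field_simp
    have hcurve := eval_curve_hasDerivAt (fun s : ℝ => 1 / s) (fun s : ℝ => y / s ^ 2) x
      (-(1 / x ^ 2)) (-(2 * y / x ^ 3)) hinvd hyd f
    have hpowd : HasDerivAt (fun s : ℝ => s ^ (2 * n)) (((2 * n : ℕ) : ℝ) * x ^ (2 * n) / x) x := by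
      have := hasDerivAt_pow (2 * n) x
      refine this.congr_deriv ?_
      rcases n with _ | p
      · simp
      · have h2n : 2 * (p + 1) - 1 = 2 * p + 1 := by omega
        rw [h2n]
        field_simp
        ring
    have hprod := hpowd.mul hcurve
    have heq : (fun s => eval ![s, y] g) =ᶠ[nhds x]
        (fun s : ℝ => s ^ (2 * n) * eval ![1 / s, y / s ^ 2] f) := by
      filter_upwards [eventually_ne_nhds hx] with s hs
      rw [hgev s y, hstrict s y hs]
    have h2x := hprod.congr_of_eventuallyEq heq
    have hDx : eval ![x, y] (pderiv 0 g) =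
        ((2 * n : ℕ) : ℝ) * x ^ (2 * n) / x * F0 +
          x ^ (2 * n) * (A0 * (-(1 / x ^ 2)) + A1 * (-(2 * y / x ^ 3))) :=
      h1x.unique h2x
    -- y-derivative of eval g
    have h1y : HasDerivAt (fun s => eval ![x, s] g) (eval ![x, y] (pderiv 1 g)) y := by
      simpa using eval_curve_hasDerivAt (fun _ => x) id y 0 1 (hasDerivAt_const y x)
        (hasDerivAt_id y) g
    have hyd2 : HasDerivAt (fun s : ℝ => s / x ^ 2) (1 / x ^ 2) y := by
      simpa [one_div] using (hasDerivAt_id y).div_const (x ^ 2)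
    have hcurve2 := (eval_curve_hasDerivAt (fun _ : ℝ => 1 / x) (fun s : ℝ => s / x ^ 2) y 0
      (1 / x ^ 2) (hasDerivAt_const y (1 / x)) hyd2 f).const_mul (x ^ (2 * n))
    have hfun : (fun s => eval ![x, s] g) =
        fun s : ℝ => x ^ (2 * n) * eval ![1 / x, s / x ^ 2] f := by
      funext s
      rw [hgev x s, hstrict x s hx]
    rw [← hfun] at hcurve2
    have hDy : eval ![x, y] (pderiv 1 g) =
        x ^ (2 * n) * (A0 * 0 + A1 * (1 / x ^ 2)) := h1y.unique hcurve2
    -- evaluated invariance identity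
    have hE := congrArg (eval ![1 / x, y / x ^ 2]) hinv
    simp only [eval_add, eval_mul, eval_pow, eval_X, eval_C, Matrix.cons_val_zero,
      Matrix.cons_val_one, Matrix.head_cons, ← hF0, ← hA0, ← hA1] at hE
    rw [hk] at hE
    simp only [eval_add, eval_mul, eval_X, eval_C, Matrix.cons_val_zero,
      Matrix.cons_val_one, Matrix.head_cons] at hE
    -- now prove the evaluated goal
    have hg : eval ![x, y] g = x ^ (2 * n) * F0 := by
      rw [hgev x y, hstrict x y hx]
    simp only [eval_mul, eval_add, eval_X, Matrix.cons_val_zero]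
    rw [hDx, hDy, hg]
    simp only [hPdef, hQdef, hKpdef, eval_add, eval_sub, eval_mul, eval_pow, eval_X, eval_C,
      Matrix.cons_val_zero, Matrix.cons_val_one, Matrix.head_cons]
    set B : ℝ := x ^ (2 * n) with hB
    set N : ℝ := ((2 * n : ℕ) : ℝ) with hN
    refine mul_left_cancel₀ (pow_ne_zero 13 hx) ?_
    field_simp at hE
    field_simp
    linear_combination (-B) * hE
  -- Step 2: algebraic manipulation
  have hX : (X 0 : MvPolynomial (Fin 2) ℝ) ≠ 0 := X_ne_zero 0
  have hz1 : pderiv 1 ((X 0 : MvPolynomial (Fin 2) ℝ) ^ m) = 0 := pderiv1_X0_pow m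
  have hpd0 : X 0 * pderiv 0 g = C (m : ℝ) * g + X 0 ^ (m + 1) * pderiv 0 ftilde := by
    rw [hgdef, pderiv_mul]
    calc X 0 * (pderiv 0 (X 0 ^ m) * ftilde + X 0 ^ m * pderiv 0 ftilde)
        = (X 0 * pderiv 0 ((X 0 : MvPolynomial (Fin 2) ℝ) ^ m)) * ftilde +
            X 0 ^ (m + 1) * pderiv 0 ftilde := by ring
      _ = _ := by rw [X_mul_pderiv_pow m]; ring
  have hpd1 : pderiv 1 g = X 0 ^ m * pderiv 1 ftilde := by
    rw [hgdef, pderiv_mul, hz1]; simp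
  have hmain : C (m : ℝ) * P * ftilde +
      X 0 * (P * pderiv 0 ftilde + Q * pderiv 1 ftilde) = ftilde * Kp := by
    apply mul_left_cancel₀ (pow_ne_zero m hX)
    linear_combination hpoly - P * hpd0 - (X 0 * Q) * hpd1 + (Kp - C (m : ℝ) * P) * hgdef
  set r : ℝ := ((2 * n : ℕ) : ℝ) - (m : ℝ) with hr
  set γ : ℝ := r * a11 - c2 with hγdef
  set W : MvPolynomial (Fin 2) ℝ :=
    C (r * a20 - c1) + C (r * a10 - c0) * X 0 + C (r * a01) * X 1 with hWdef
  have hKp2 : Kp - C (m : ℝ) * P = X 0 * W + C γ * X 1 := by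
    rw [hKpdef, hPdef, hWdef, hγdef, hr]
    simp only [map_sub, map_mul, map_add, map_natCast]
    ring
  have hdvd : X 0 ∣ C γ * (ftilde * X 1) :=
    ⟨P * pderiv 0 ftilde + Q * pderiv 1 ftilde - ftilde * W, by
      linear_combination (-1 : MvPolynomial (Fin 2) ℝ) * hmain - ftilde * hKp2⟩
  have hγ0 : γ = 0 := by
    by_contra hγ
    rcases (prime_X0.2.2 _ _ hdvd) with h | h
    · exact prime_X0.2.1 (isUnit_of_dvd_unit h ((isUnit_iff_ne_zero.mpr hγ).map C))
    · rcases (prime_X0.2.2 _ _ h) with h' | h'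
      · exact hnotdvd h'
      · have := X_dvd_X.mp h'
        simp at this
  refine ⟨W, ?_, ?_⟩
  · apply le_trans (totalDegree_add _ _)
    apply max_le
    · apply le_trans (totalDegree_add _ _)
      apply max_le
      · rw [totalDegree_C]; exact zero_le_one
      · exact le_trans (totalDegree_mul _ _)
          (by rw [totalDegree_C, totalDegree_X])
    · exact le_trans (totalDegree_mul _ _)
        (by rw [totalDegree_C, totalDegree_X])
  · apply mul_left_cancel₀ hX
    rw [hγ0] at hKp2
    simp only [map_zero, zero_mul, add_zero] at hKp2
    linear_combination hmain + ftilde * hKp2
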